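/- arXiv:2601.11648 — 8 statements merged into one kernel-verified Lean document; each statement's English description precedes it below -/
import Mathlib

section
/- For every integer m > 1 and every point p in the zero set e_m⁻¹(0), the Fréchet derivative of e_m at p is nonzero (so 0 is a regular value of e_m and e_m⁻¹(0) is a smooth hypersurface of dimension m). -/
noncomputable def c10 (x : ℝ) : ℝ := (Real.sin x) ^ 2 / (2 * (x ^ 2 + 1))
noncomputable def c20 (x : ℝ) : ℝ := 1 / (x ^ 2 + 1)
noncomputable def e (m : ℕ) : ℝ × ℝ × (Fin (m - 1) → ℝ) → ℝ :=
  fun p => (p.1 - c10 p.2.1) * (c20 p.2.1 - p.1) - ∑ j, (p.2.2 j) ^ 2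

lemma c10_lt_c20 (x : ℝ) : c10 x < c20 x := by
  unfold c10 c20
  have h : (0:ℝ) < x ^ 2 + 1 := by positivity
  have hs := Real.sin_sq_le_one x
  rw [div_lt_div_iff₀ (by linarith) h]
  nlinarith

lemma diff_c10 (x : ℝ) : DifferentiableAt ℝ c10 x := by
  unfold c10
  exact DifferentiableAt.div (by fun_prop) (by fun_prop) (by positivity)

lemma diff_c20 (x : ℝ) : DifferentiableAt ℝ c20 x := by
  unfold c20
  exact DifferentiableAt.div (by fun_prop) (by fun_prop) (by positivity)

lemma diff_e (m : ℕ) (p : ℝ × ℝ × (Fin (m - 1) → ℝ)) :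
    DifferentiableAt ℝ (e m) p := by
  unfold e
  apply DifferentiableAt.sub
  · apply DifferentiableAt.mul
    · exact differentiableAt_fst.sub ((diff_c10 p.2.1).comp p differentiableAt_snd.fst)
    · exact ((diff_c20 p.2.1).comp p differentiableAt_snd.fst).sub differentiableAt_fst
  · apply DifferentiableAt.fun_sum
    intro j _
    exact (((ContinuousLinearMap.proj j : (Fin (m-1) → ℝ) →L[ℝ] ℝ).differentiableAt).comp p
      differentiableAt_snd.snd).pow 2

lemma dir_deriv (m : ℕ) (p v : ℝ × ℝ × (Fin (m - 1) → ℝ)) :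
    HasDerivAt (fun t : ℝ => e m (p + t • v)) (fderiv ℝ (e m) p v) 0 := by
  have hline : HasDerivAt (fun t : ℝ => p + t • v) v 0 := by
    simpa using ((hasDerivAt_id (0:ℝ)).smul_const v).const_add p
  have hF : HasFDerivAt (e m) (fderiv ℝ (e m) p) ((fun t : ℝ => p + t • v) 0) := by
    simpa using (diff_e m p).hasFDerivAt
  simpa [Function.comp_def] using hF.comp_hasDerivAt 0 hline

theorem stmt2 (m : ℕ) (hm : 1 < m) (p : ℝ × ℝ × (Fin (m - 1) → ℝ))
    (hp : e m p = 0) : fderiv ℝ (e m) p ≠ 0 := by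
  obtain ⟨x1, x2, y⟩ := p
  by_cases hy : y = 0
  · -- all y_j = 0 : use direction (1,0,0)
    subst hy
    have hzero : (x1 - c10 x2) * (c20 x2 - x1) = 0 := by
      simpa [e] using hp
    set v : ℝ × ℝ × (Fin (m - 1) → ℝ) := (1, 0, 0) with hv
    have hg : (fun t : ℝ => e m ((x1, x2, (0 : Fin (m-1) → ℝ)) + t • v)) =
        fun t => ((x1 + t) - c10 x2) * (c20 x2 - (x1 + t)) := by
      funext t
      simp [e, hv, Prod.smul_mk, Prod.mk_add_mk]
    have hd : HasDerivAt (fun t : ℝ => ((x1 + t) - c10 x2) * (c20 x2 - (x1 + t)))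
        (1 * (c20 x2 - (x1 + 0)) + ((x1 + 0) - c10 x2) * (-1)) 0 := by
      have h1 : HasDerivAt (fun t : ℝ => (x1 + t) - c10 x2) 1 0 := by
        simpa using (((hasDerivAt_id (0:ℝ)).const_add x1).sub_const (c10 x2))
      have h2 : HasDerivAt (fun t : ℝ => c20 x2 - (x1 + t)) (-1) 0 := by
        simpa using (((hasDerivAt_id (0:ℝ)).const_add x1).const_sub (c20 x2))
      simpa using h1.fun_mul h2
    have hval : fderiv ℝ (e m) (x1, x2, (0 : Fin (m-1) → ℝ)) v
        = c20 x2 - x1 - (x1 - c10 x2) := by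
      have := (dir_deriv m (x1, x2, 0) v).unique (by rw [hg] at *; simpa using hd)
      linarith [this]
    intro h0
    rw [h0] at hval
    simp at hval
    have hlt := c10_lt_c20 x2
    rcases mul_eq_zero.1 hzero with h | h <;> nlinarith
  · -- some y_j ≠ 0 : use direction (0,0, single j 1)
    obtain ⟨j, hj⟩ : ∃ j, y j ≠ 0 := by
      by_contra h; push_neg at h; exact hy (funext h)
    set v : ℝ × ℝ × (Fin (m - 1) → ℝ) := (0, 0, Pi.single j 1) with hv
    have hg : (fun t : ℝ => e m ((x1, x2, y) + t • v)) =
        fun t => (x1 - c10 x2) * (c20 x2 - x1)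
          - ∑ k, (y k + t * (Pi.single j 1 : Fin (m-1) → ℝ) k) ^ 2 := by
      funext t
      simp [e, hv, Prod.smul_mk, Prod.mk_add_mk, Pi.add_apply, Pi.smul_apply,
        smul_eq_mul]
    have hsum : HasDerivAt (fun t : ℝ => ∑ k, (y k + t * (Pi.single j 1 : Fin (m-1) → ℝ) k) ^ 2)
        (∑ k, 2 * (y k + 0 * (Pi.single j 1 : Fin (m-1) → ℝ) k) ^ 1 * (Pi.single j 1 : Fin (m-1) → ℝ) k) 0 := by
      apply HasDerivAt.fun_sum
      intro k _
      have := (((hasDerivAt_id (0:ℝ)).mul_const ((Pi.single j 1 : Fin (m-1) → ℝ) k)).const_add (y k)).fun_pow 2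
      simpa using this
    have hd : HasDerivAt (fun t : ℝ => (x1 - c10 x2) * (c20 x2 - x1)
          - ∑ k, (y k + t * (Pi.single j 1 : Fin (m-1) → ℝ) k) ^ 2)
        (-(2 * y j)) 0 := by
      have := hsum.const_sub ((x1 - c10 x2) * (c20 x2 - x1))
      have hsv : (∑ k, 2 * (y k + 0 * (Pi.single j 1 : Fin (m-1) → ℝ) k) ^ 1 * (Pi.single j 1 : Fin (m-1) → ℝ) k)
          = 2 * y j := by
        simp [Pi.single_apply, mul_ite, Finset.sum_ite_eq']
      rwa [hsv] at this
    have hval : fderiv ℝ (e m) (x1, x2, y) v = -(2 * y j) := by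
      exact (dir_deriv m (x1, x2, y) v).unique (by rw [hg]; exact hd)
    intro h0
    rw [h0] at hval
    simp at hval
    exact hj hval
end

section
/- For every integer m > 1, the image of the first-coordinate projection restricted to the zero set of e_m equals the closed interval [0, 1]; that is, {x₁ ∈ ℝ : ∃ x₂ ∈ ℝ, ∃ y : Fin (m−1) → ℝ, e_m(x₁, x₂, y) = 0} = [0, 1]. -/
theorem stmt4 (m : ℕ) (hm : 1 < m) :
    {x₁ : ℝ | ∃ x₂ : ℝ, ∃ y : Fin (m - 1) → ℝ, e m (x₁, x₂, y) = 0} =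
      Set.Icc (0 : ℝ) 1 := by
  ext x₁
  simp only [Set.mem_setOf_eq, Set.mem_Icc]
  constructor
  · rintro ⟨x₂, y, he⟩
    have hd : (0:ℝ) < x₂ ^ 2 + 1 := by positivity
    have hc10 : 0 ≤ c10 x₂ := by unfold c10; positivity
    have hc20 : c20 x₂ ≤ 1 := by
      unfold c20; rw [div_le_one hd]; nlinarith [sq_nonneg x₂]
    have h12 : c10 x₂ ≤ c20 x₂ := by
      unfold c10 c20
      rw [div_le_div_iff₀ (by positivity) hd]
      nlinarith [Real.sin_sq_le_one x₂, sq_nonneg x₂]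
    have hs : 0 ≤ ∑ j, (y j) ^ 2 := Finset.sum_nonneg fun j _ => sq_nonneg _
    have hp : 0 ≤ (x₁ - c10 x₂) * (c20 x₂ - x₁) := by
      simp only [e] at he; linarith
    constructor
    · nlinarith
    · nlinarith
  · rintro ⟨h0, h1⟩
    have hnn : 0 ≤ x₁ * (1 - x₁) := by nlinarith
    refine ⟨0, fun j => if j = ⟨0, by omega⟩ then Real.sqrt (x₁ * (1 - x₁)) else 0, ?_⟩
    have hsum : ∑ j : Fin (m - 1),
        (if j = (⟨0, by omega⟩ : Fin (m - 1)) then Real.sqrt (x₁ * (1 - x₁)) else 0) ^ 2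
        = x₁ * (1 - x₁) := by
      rw [Finset.sum_eq_single (⟨0, by omega⟩ : Fin (m - 1))]
      · rw [if_pos rfl, Real.sq_sqrt hnn]
      · intro j _ hj; rw [if_neg hj]; ring
      · intro h; exact absurd (Finset.mem_univ _) h
    simp only [e, c10, c20, hsum, Real.sin_zero]
    norm_num
end

section
/- For every integer m > 1, the level set of the first-coordinate projection at value 0 on the zero set of e_m is exactly the set of points (0, kπ, 0) for k ∈ ℤ; that is, {(x₁, x₂, y) : e_m(x₁, x₂, y) = 0 and x₁ = 0} = {(0, kπ, 0) : k ∈ ℤ}. In particular this set is infinite and is a discrete, closed subset of e_m⁻¹(0). -/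
theorem stmt6 (m : ℕ) (hm : 1 < m) :
    {p : ℝ × ℝ × (Fin (m - 1) → ℝ) | e m p = 0 ∧ p.1 = 0} =
      {p : ℝ × ℝ × (Fin (m - 1) → ℝ) |
        ∃ k : ℤ, p = (0, (k : ℝ) * Real.pi, 0)} ∧
    {p : ℝ × ℝ × (Fin (m - 1) → ℝ) | e m p = 0 ∧ p.1 = 0}.Infinite ∧
    IsClosed {p : ℝ × ℝ × (Fin (m - 1) → ℝ) | e m p = 0 ∧ p.1 = 0} ∧
    DiscreteTopology
      {p : ℝ × ℝ × (Fin (m - 1) → ℝ) | e m p = 0 ∧ p.1 = 0} := by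
  have h_eq : {p : ℝ × ℝ × (Fin (m - 1) → ℝ) | e m p = 0 ∧ p.1 = 0} =
      {p : ℝ × ℝ × (Fin (m - 1) → ℝ) | ∃ k : ℤ, p = (0, (k : ℝ) * Real.pi, 0)} := by
    ext ⟨x1, x2, y⟩
    simp only [Set.mem_setOf_eq, e, c10, c20]
    constructor
    · rintro ⟨he, rfl⟩
      have hpos : (0:ℝ) < x2 ^ 2 + 1 := by positivity
      have hA : 0 ≤ Real.sin x2 ^ 2 / (2 * (x2 ^ 2 + 1)) * (1 / (x2 ^ 2 + 1)) := by positivity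
      have hB : 0 ≤ ∑ j, (y j) ^ 2 := Finset.sum_nonneg fun j _ => sq_nonneg _
      have hsum : Real.sin x2 ^ 2 / (2 * (x2 ^ 2 + 1)) * (1 / (x2 ^ 2 + 1))
          + ∑ j, (y j) ^ 2 = 0 := by linarith [he]
      have h1 : Real.sin x2 ^ 2 / (2 * (x2 ^ 2 + 1)) * (1 / (x2 ^ 2 + 1)) = 0 := by
        nlinarith
      have h2 : ∑ j, (y j) ^ 2 = 0 := by nlinarith
      have hsin : Real.sin x2 = 0 := by
        field_simp at h1
        simpa using h1
      obtain ⟨k, hk⟩ := Real.sin_eq_zero_iff.mp hsin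
      have hy : y = 0 := by
        funext j
        have := (Finset.sum_eq_zero_iff_of_nonneg (fun j _ => sq_nonneg (y j))).mp h2 j
          (Finset.mem_univ j)
        exact pow_eq_zero_iff (by norm_num) |>.mp this
      exact ⟨k, by rw [hy, ← hk]⟩
    · rintro ⟨k, hk⟩
      obtain ⟨rfl, rfl, rfl⟩ := Prod.mk.injEq .. ▸ (by
        simpa [Prod.ext_iff] using hk : x1 = 0 ∧ x2 = (k:ℝ) * Real.pi ∧ y = 0)
      have hs : Real.sin ((k:ℝ) * Real.pi) = 0 := Real.sin_int_mul_pi k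
      simp [hs]
  refine ⟨h_eq, ?_, ?_, ?_⟩
  · rw [h_eq]
    apply Set.infinite_of_injective_forall_mem
      (f := fun k : ℤ => (((0:ℝ), (k : ℝ) * Real.pi, (0 : Fin (m-1) → ℝ)) : ℝ × ℝ × (Fin (m - 1) → ℝ)))
    · intro a b hab
      simp only [Prod.mk.injEq] at hab
      have := hab.2.1
      exact_mod_cast mul_right_cancel₀ Real.pi_ne_zero this
    · intro k
      exact ⟨k, rfl⟩
  · have hc : Continuous (e m) := by
      unfold e c10 c20
      fun_prop (disch := intros; positivity)
    exact (isClosed_eq hc continuous_const).inter (isClosed_eq continuous_fst continuous_const)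
  · rw [h_eq]
    rw [discreteTopology_iff_isOpen_singleton]
    rintro ⟨p, k, rfl⟩
    rw [isOpen_induced_iff]
    refine ⟨(fun q : ℝ × ℝ × (Fin (m-1) → ℝ) => q.2.1) ⁻¹' Metric.ball ((k:ℝ) * Real.pi) Real.pi,
      Metric.isOpen_ball.preimage (by fun_prop), ?_⟩
    ext ⟨q, k', rfl⟩
    simp only [Set.mem_preimage, Metric.mem_ball, Real.dist_eq, Set.mem_singleton_iff,
      Subtype.mk.injEq, Prod.mk.injEq]
    constructor
    · intro h
      have hx : |((k':ℝ) - k) * Real.pi| < Real.pi := by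
        rw [show ((k':ℝ) - k) * Real.pi = (k':ℝ) * Real.pi - (k:ℝ) * Real.pi by ring]
        exact h
      rw [abs_mul, abs_of_pos Real.pi_pos] at hx
      have h2 : |((k':ℝ) - k)| < 1 := by nlinarith [Real.pi_pos]
      have h3 : k' = k := by
        have h4 : |(k' - k : ℤ)| < 1 := by exact_mod_cast h2
        rw [abs_lt] at h4
        omega
      subst h3
      simp
    · rintro ⟨_, h, _⟩
      rw [h]
      simpa using Real.pi_pos
end

section
/- For every natural number n, the n-th iterated derivative of c₀ at 0 equals 0. -/
noncomputable def c0 (x : ℝ) : ℝ :=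
  if x = 0 then 0 else Real.exp (-1 / x ^ 2) * x * (Real.sin (1 / x)) ^ 2

open Real Filter Topology

namespace Stmt11Aux

noncomputable def M (j k a b : ℕ) (x : ℝ) : ℝ :=
  x ^ j * (x⁻¹) ^ k * Real.sin x⁻¹ ^ a * Real.cos x⁻¹ ^ b

inductive Nice : (ℝ → ℝ) → Prop
  | mono (j k a b : ℕ) : Nice (M j k a b)
  | add {f g : ℝ → ℝ} : Nice f → Nice g → Nice (fun x => f x + g x)
  | smul (c : ℝ) {f : ℝ → ℝ} : Nice f → Nice (fun x => c * f x)

lemma M_hasDerivAt (j k a b : ℕ) {x : ℝ} (hx : x ≠ 0) :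
    HasDerivAt (M j k a b)
      ((j : ℝ) * M (j-1) k a b x - (k : ℝ) * M j (k+1) a b x
        - (a : ℝ) * M j (k+2) (a-1) (b+1) x + (b : ℝ) * M j (k+2) (a+1) (b-1) x) x := by
  have hinv : HasDerivAt (fun y : ℝ => y⁻¹) (-(x^2)⁻¹) x := hasDerivAt_inv hx
  have h1 : HasDerivAt (fun y : ℝ => y ^ j) ((j : ℝ) * x ^ (j-1)) x := hasDerivAt_pow j x
  have h2 : HasDerivAt (fun y : ℝ => (y⁻¹) ^ k) ((k : ℝ) * (x⁻¹) ^ (k-1) * -(x^2)⁻¹) x :=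
    hinv.pow k
  have hs : HasDerivAt (fun y : ℝ => Real.sin y⁻¹) (Real.cos x⁻¹ * -(x^2)⁻¹) x :=
    (Real.hasDerivAt_sin x⁻¹).comp x hinv
  have hc : HasDerivAt (fun y : ℝ => Real.cos y⁻¹) (-Real.sin x⁻¹ * -(x^2)⁻¹) x :=
    (Real.hasDerivAt_cos x⁻¹).comp x hinv
  have h3 : HasDerivAt (fun y : ℝ => Real.sin y⁻¹ ^ a)
      ((a : ℝ) * Real.sin x⁻¹ ^ (a-1) * (Real.cos x⁻¹ * -(x^2)⁻¹)) x := hs.pow a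
  have h4 : HasDerivAt (fun y : ℝ => Real.cos y⁻¹ ^ b)
      ((b : ℝ) * Real.cos x⁻¹ ^ (b-1) * (-Real.sin x⁻¹ * -(x^2)⁻¹)) x := hc.pow b
  have H := ((h1.mul h2).mul h3).mul h4
  simp only [Pi.mul_def] at H
  convert H using 1
  · rfl
  · rfl
  · rfl
  rcases j with _ | j <;> rcases k with _ | k <;> rcases a with _ | a <;> rcases b with _ | b <;>
    (simp only [M, Nat.cast_zero, zero_mul, mul_zero, Nat.succ_sub_one, Nat.zero_sub,
        pow_zero, mul_one, one_mul, sq, mul_inv, zero_add, add_zero, sub_zero, zero_sub] <;>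
      push_cast <;> ring)


lemma Nice.congr {f g : ℝ → ℝ} (hf : Nice f) (h : f = g) : Nice g := h ▸ hf

lemma Nice.inv3_mul {g : ℝ → ℝ} (hg : Nice g) : Nice (fun x => (x⁻¹)^3 * g x) := by
  induction hg with
  | mono j k a b =>
      exact (Nice.mono j (k+3) a b).congr (by funext x; simp only [M, pow_add]; ring)
  | add hf hg ihf ihg =>
      exact (ihf.add ihg).congr (by funext x; ring)
  | smul c hf ih =>
      exact (Nice.smul c ih).congr (by funext x; ring)

lemma Nice.deriv {g : ℝ → ℝ} (hg : Nice g) :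
    ∃ g', Nice g' ∧ ∀ x : ℝ, x ≠ 0 → HasDerivAt g (g' x) x := by
  induction hg with
  | mono j k a b =>
      refine ⟨fun x => (j : ℝ) * M (j-1) k a b x - (k : ℝ) * M j (k+1) a b x
        - (a : ℝ) * M j (k+2) (a-1) (b+1) x + (b : ℝ) * M j (k+2) (a+1) (b-1) x, ?_, ?_⟩
      · have : Nice (fun x => (j : ℝ) * M (j-1) k a b x + (-(k : ℝ)) * M j (k+1) a b x
            + (-(a : ℝ)) * M j (k+2) (a-1) (b+1) x + (b : ℝ) * M j (k+2) (a+1) (b-1) x) :=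
          (((Nice.smul _ (Nice.mono _ _ _ _)).add (Nice.smul _ (Nice.mono _ _ _ _))).add
            (Nice.smul _ (Nice.mono _ _ _ _))).add (Nice.smul _ (Nice.mono _ _ _ _))
        exact this.congr (by funext x; ring)
      · intro x hx; exact M_hasDerivAt j k a b hx
  | add hf hg ihf ihg =>
      obtain ⟨f', hf', Hf⟩ := ihf; obtain ⟨g', hg', Hg⟩ := ihg
      exact ⟨fun x => f' x + g' x, hf'.add hg', fun x hx => (Hf x hx).add (Hg x hx)⟩
  | smul c hf ih =>
      obtain ⟨f', hf', Hf⟩ := ih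
      exact ⟨fun x => c * f' x, Nice.smul c hf', fun x hx => (Hf x hx).const_mul c⟩

lemma Nice.bound {g : ℝ → ℝ} (hg : Nice g) :
    ∃ C m, 0 ≤ C ∧ ∀ x : ℝ, x ≠ 0 → |x| ≤ 1 → |g x| ≤ C * |x|⁻¹ ^ m := by
  induction hg with
  | mono j k a b =>
      refine ⟨1, k, zero_le_one, fun x hx hx1 => ?_⟩
      have h0 : (0:ℝ) < |x| := abs_pos.2 hx
      have hxj : |x| ^ j ≤ 1 := pow_le_one₀ (abs_nonneg x) hx1
      have hsin : |Real.sin x⁻¹| ^ a ≤ 1 := pow_le_one₀ (abs_nonneg _) (abs_sin_le_one _)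
      have hcos : |Real.cos x⁻¹| ^ b ≤ 1 := pow_le_one₀ (abs_nonneg _) (abs_cos_le_one _)
      have : |M j k a b x| = |x|^j * |x⁻¹|^k * |Real.sin x⁻¹|^a * |Real.cos x⁻¹|^b := by
        simp only [M, abs_mul, abs_pow]
      rw [this, one_mul, abs_inv]
      calc |x|^j * |x|⁻¹^k * |Real.sin x⁻¹|^a * |Real.cos x⁻¹|^b
          ≤ 1 * |x|⁻¹^k * 1 * 1 := by
            gcongr
        _ = |x|⁻¹ ^ k := by ring
  | @add f g hf hg ihf ihg =>
      obtain ⟨C1, m1, hC1, H1⟩ := ihf; obtain ⟨C2, m2, hC2, H2⟩ := ihg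
      refine ⟨C1 + C2, max m1 m2, by positivity, fun x hx hx1 => ?_⟩
      have h0 : (0:ℝ) < |x| := abs_pos.2 hx
      have h1 : (1:ℝ) ≤ |x|⁻¹ := (one_le_inv₀ h0).2 hx1
      have e1 : |x|⁻¹ ^ m1 ≤ |x|⁻¹ ^ max m1 m2 := pow_le_pow_right₀ h1 (le_max_left _ _)
      have e2 : |x|⁻¹ ^ m2 ≤ |x|⁻¹ ^ max m1 m2 := pow_le_pow_right₀ h1 (le_max_right _ _)
      calc |f x + g x| ≤ |f x| + |g x| := abs_add_le _ _
        _ ≤ C1 * |x|⁻¹ ^ m1 + C2 * |x|⁻¹ ^ m2 := add_le_add (H1 x hx hx1) (H2 x hx hx1)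
        _ ≤ C1 * |x|⁻¹ ^ max m1 m2 + C2 * |x|⁻¹ ^ max m1 m2 := by gcongr
        _ = (C1 + C2) * |x|⁻¹ ^ max m1 m2 := by ring
  | @smul c f hf ih =>
      obtain ⟨C, m, hC, H⟩ := ih
      refine ⟨|c| * C, m, by positivity, fun x hx hx1 => ?_⟩
      calc |c * f x| = |c| * |f x| := abs_mul _ _
        _ ≤ |c| * (C * |x|⁻¹ ^ m) := by gcongr; exact H x hx hx1
        _ = |c| * C * |x|⁻¹ ^ m := by ring


lemma tendsto_exp_inv_pow (p : ℕ) :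
    Tendsto (fun x : ℝ => Real.exp (-1 / x ^ 2) * (1 / x ^ 2) ^ p) (𝓝[≠] (0:ℝ)) (𝓝 0) := by
  have hsq : Tendsto (fun x : ℝ => x ^ 2) (𝓝[≠] (0:ℝ)) (𝓝[>] 0) := by
    apply tendsto_nhdsWithin_of_tendsto_nhds_of_eventually_within
    · simpa using ((continuous_pow 2).tendsto (0:ℝ)).mono_left nhdsWithin_le_nhds
    · filter_upwards [eventually_mem_nhdsWithin] with x (hx : x ≠ 0)
      have : (0:ℝ) < x ^ 2 := by positivity
      simpa using this
  have h1 : Tendsto (fun x : ℝ => 1 / x ^ 2) (𝓝[≠] (0:ℝ)) atTop := by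
    have := tendsto_inv_nhdsGT_zero.comp hsq
    simpa [Function.comp_def, one_div] using this
  have h2 := (tendsto_pow_mul_exp_neg_atTop_nhds_zero p).comp h1
  apply h2.congr
  intro x
  simp only [Function.comp]
  rw [neg_div]
  ring

lemma hasDerivAt_zero {f g : ℝ → ℝ} (hg : Nice g) (h0 : f 0 = 0)
    (hfx : ∀ x : ℝ, x ≠ 0 → f x = Real.exp (-1 / x ^ 2) * g x) : HasDerivAt f 0 0 := by
  obtain ⟨C, m, hC, H⟩ := hg.bound
  rw [hasDerivAt_iff_tendsto_slope]
  apply squeeze_zero_norm' (a := fun x => C * (Real.exp (-1 / x ^ 2) * (1 / x ^ 2) ^ (m + 1)))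
  · have hsmall : ∀ᶠ x in 𝓝[≠] (0:ℝ), |x| ≤ 1 := by
      apply eventually_nhdsWithin_of_eventually_nhds
      have : ∀ᶠ x in 𝓝 (0:ℝ), |x - 0| < 1 := eventually_abs_sub_lt 0 one_pos
      filter_upwards [this] with x hx
      simpa using hx.le
    filter_upwards [hsmall, eventually_mem_nhdsWithin] with x hx1 (hx : x ≠ 0)
    have h0x : (0:ℝ) < |x| := abs_pos.2 hx
    have hinv1 : (1:ℝ) ≤ |x|⁻¹ := (one_le_inv₀ h0x).2 hx1
    have hslope : slope f 0 x = f x / x := by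
      simp [slope_def_field, h0]
    have hxp : (1:ℝ) / x ^ 2 = (|x|⁻¹) ^ 2 := by
      rw [one_div, inv_pow, sq_abs]
    have hle : |x|⁻¹ ^ (m + 1) ≤ (1 / x ^ 2) ^ (m + 1) := by
      rw [hxp]
      apply pow_le_pow_left₀ (by positivity)
      calc |x|⁻¹ = |x|⁻¹ * 1 := by ring
        _ ≤ |x|⁻¹ * |x|⁻¹ := by gcongr
        _ = |x|⁻¹ ^ 2 := by ring
    have hexp : (0:ℝ) < Real.exp (-1 / x ^ 2) := Real.exp_pos _
    rw [hslope, hfx x hx]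
    rw [Real.norm_eq_abs, abs_div, abs_mul, abs_of_pos hexp]
    calc Real.exp (-1 / x ^ 2) * |g x| / |x|
        ≤ Real.exp (-1 / x ^ 2) * (C * |x|⁻¹ ^ m) / |x| := by
          gcongr
          exact H x hx hx1
      _ = C * (Real.exp (-1 / x ^ 2) * |x|⁻¹ ^ (m + 1)) := by
          rw [pow_succ]
          ring
      _ ≤ C * (Real.exp (-1 / x ^ 2) * (1 / x ^ 2) ^ (m + 1)) := by gcongr
  · simpa using (tendsto_exp_inv_pow (m + 1)).const_mul C

lemma key (n : ℕ) : ∃ g, Nice g ∧ iteratedDeriv n c0 0 = 0 ∧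
    ∀ x : ℝ, x ≠ 0 → iteratedDeriv n c0 x = Real.exp (-1 / x ^ 2) * g x := by
  induction n with
  | zero =>
      refine ⟨M 1 0 2 0, Nice.mono 1 0 2 0, by simp [c0], fun x hx => ?_⟩
      simp only [iteratedDeriv_zero, c0, if_neg hx, M, one_div]
      ring
  | succ n ih =>
      obtain ⟨g, hg, h0, hx⟩ := ih
      obtain ⟨g', hg', Hg'⟩ := hg.deriv
      refine ⟨fun x => 2 * (x⁻¹) ^ 3 * g x + g' x, ?_, ?_, ?_⟩
      · exact ((Nice.smul 2 hg.inv3_mul).add hg').congr (by funext x; ring)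
      · rw [iteratedDeriv_succ]
        exact (hasDerivAt_zero hg h0 hx).deriv
      · intro x hxne
        rw [iteratedDeriv_succ]
        have heq : iteratedDeriv n c0 =ᶠ[𝓝 x] (fun y => Real.exp (-1 / y ^ 2) * g y) := by
          filter_upwards [isOpen_ne.mem_nhds hxne] with y hy using hx y hy
        rw [heq.deriv_eq]
        have hx2 : x ^ 2 ≠ 0 := pow_ne_zero 2 hxne
        have hE : HasDerivAt (fun y : ℝ => Real.exp (-1 / y ^ 2))
            (Real.exp (-1 / x ^ 2) * (2 / x ^ 3)) x := by
          have funeq : (fun y : ℝ => Real.exp (-1 / y ^ 2))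
              = fun y : ℝ => Real.exp (-((y ^ 2)⁻¹)) := by
            funext y; rw [neg_div, one_div]
          rw [funeq]
          have h := (((hasDerivAt_pow 2 x).inv hx2).neg).exp
          simp only [Pi.neg_apply, Pi.inv_apply] at h
          convert h using 1
          rw [show (-1 : ℝ) / x ^ 2 = -((x ^ 2)⁻¹) by rw [neg_div, one_div]]
          field_simp
          ring
        have hD := (hE.mul (Hg' x hxne)).deriv
        rw [show deriv (fun y => Real.exp (-1 / y ^ 2) * g y) x = _ from hD]
        field_simp

end Stmt11Aux

theorem stmt11 (n : ℕ) : iteratedDeriv n c0 0 = 0 := by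
  obtain ⟨g, hg, h0, hx⟩ := Stmt11Aux.key n
  exact h0
end

section
/- For every natural number n, the quotient (iteratedDeriv n c₀)(x) / x tends to 0 as x tends to 0 through nonzero values; that is, the n-th derivative of c₀ vanishes to order higher than 1 at 0. -/
open Real Filter

inductive Nice : (ℝ → ℝ) → Prop
  | const (c : ℝ) : Nice (fun _ => c)
  | id : Nice (fun x => x)
  | inv : Nice (fun x => 1 / x)
  | sin : Nice (fun x => Real.sin (1 / x))
  | cos : Nice (fun x => Real.cos (1 / x))
  | add {f g} : Nice f → Nice g → Nice (fun x => f x + g x)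
  | mul {f g} : Nice f → Nice g → Nice (fun x => f x * g x)

lemma nice_deriv {f : ℝ → ℝ} (hf : Nice f) :
    ∃ f', Nice f' ∧ ∀ x : ℝ, x ≠ 0 → HasDerivAt f (f' x) x := by
  induction hf with
  | const c => exact ⟨fun _ => 0, Nice.const 0, fun x _ => hasDerivAt_const x c⟩
  | id => exact ⟨fun _ => 1, Nice.const 1, fun x _ => hasDerivAt_id x⟩
  | inv =>
    refine ⟨fun x => -1 * (1 / x * (1 / x)), Nice.mul (Nice.const (-1)) (Nice.mul Nice.inv Nice.inv), fun x hx => ?_⟩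
    have h := hasDerivAt_inv hx
    have : HasDerivAt (fun x : ℝ => 1 / x) (-(x ^ 2)⁻¹) x := by
      simpa [one_div] using h
    convert this using 1
    field_simp
  | sin =>
    refine ⟨fun x => Real.cos (1 / x) * (-1 * (1 / x * (1 / x))),
      Nice.mul Nice.cos (Nice.mul (Nice.const (-1)) (Nice.mul Nice.inv Nice.inv)), fun x hx => ?_⟩
    have hinv : HasDerivAt (fun x : ℝ => 1 / x) (-1 * (1 / x * (1 / x))) x := by
      have h := hasDerivAt_inv hx
      have : HasDerivAt (fun x : ℝ => 1 / x) (-(x ^ 2)⁻¹) x := by simpa [one_div] using h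
      convert this using 1; field_simp
    exact (Real.hasDerivAt_sin (1 / x)).comp x hinv
  | cos =>
    refine ⟨fun x => (-1 * Real.sin (1 / x)) * (-1 * (1 / x * (1 / x))),
      Nice.mul (Nice.mul (Nice.const (-1)) Nice.sin) (Nice.mul (Nice.const (-1)) (Nice.mul Nice.inv Nice.inv)), ?_⟩
    · intro x hx
      have hinv : HasDerivAt (fun x : ℝ => 1 / x) (-1 * (1 / x * (1 / x))) x := by
        have h := hasDerivAt_inv hx
        have : HasDerivAt (fun x : ℝ => 1 / x) (-(x ^ 2)⁻¹) x := by simpa [one_div] using h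
        convert this using 1; field_simp
      have := (Real.hasDerivAt_cos (1 / x)).comp x hinv
      exact this.congr_deriv (by ring)
  | add hf hg ihf ihg =>
    obtain ⟨f', hf', hfd⟩ := ihf
    obtain ⟨g', hg', hgd⟩ := ihg
    exact ⟨fun x => f' x + g' x, Nice.add hf' hg', fun x hx => (hfd x hx).add (hgd x hx)⟩
  | @mul f g hf hg ihf ihg =>
    obtain ⟨f', hf', hfd⟩ := ihf
    obtain ⟨g', hg', hgd⟩ := ihg
    exact ⟨fun x => f' x * g x + f x * g' x,
      Nice.add (Nice.mul hf' hg) (Nice.mul hf hg'),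
      fun x hx => (hfd x hx).mul (hgd x hx)⟩

lemma nice_bound {f : ℝ → ℝ} (hf : Nice f) :
    ∃ C : ℝ, ∃ m : ℕ, 0 ≤ C ∧ ∀ x : ℝ, x ≠ 0 → |x| ≤ 1 → |f x| ≤ C * ((x ^ 2)⁻¹) ^ m := by
  induction hf with
  | const c => exact ⟨|c|, 0, abs_nonneg c, fun x _ _ => by simp⟩
  | id => exact ⟨1, 0, zero_le_one, fun x _ hx => by simpa using hx⟩
  | inv =>
    refine ⟨1, 1, zero_le_one, fun x hx hx1 => ?_⟩
    have h0 : 0 < |x| := abs_pos.mpr hx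
    have hx2 : (0:ℝ) < x ^ 2 := by positivity
    rw [one_mul, pow_one, abs_div, abs_one, one_div]
    exact inv_anti₀ hx2 (by nlinarith [sq_abs x, abs_nonneg x])
  | sin => exact ⟨1, 0, zero_le_one, fun x _ _ => by simpa using Real.abs_sin_le_one _⟩
  | cos => exact ⟨1, 0, zero_le_one, fun x _ _ => by simpa using Real.abs_cos_le_one _⟩
  | @add f g hf hg ihf ihg =>
    obtain ⟨C₁, m₁, hC₁, h₁⟩ := ihf
    obtain ⟨C₂, m₂, hC₂, h₂⟩ := ihg
    refine ⟨C₁ + C₂, max m₁ m₂, by positivity, fun x hx hx1 => ?_⟩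
    have hx2 : (0:ℝ) < x ^ 2 := by positivity
    have hb : (1:ℝ) ≤ (x ^ 2)⁻¹ := by
      rw [show (1:ℝ) = (1:ℝ)⁻¹ by norm_num]
      exact inv_anti₀ hx2 (by nlinarith [sq_abs x, abs_nonneg x])
    have e1 : ((x ^ 2)⁻¹) ^ m₁ ≤ ((x ^ 2)⁻¹) ^ (max m₁ m₂) := pow_le_pow_right₀ hb (le_max_left _ _)
    have e2 : ((x ^ 2)⁻¹) ^ m₂ ≤ ((x ^ 2)⁻¹) ^ (max m₁ m₂) := pow_le_pow_right₀ hb (le_max_right _ _)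
    calc |f x + g x| ≤ |f x| + |g x| := abs_add_le _ _
      _ ≤ C₁ * ((x ^ 2)⁻¹) ^ (max m₁ m₂) + C₂ * ((x ^ 2)⁻¹) ^ (max m₁ m₂) := by
          gcongr
          · exact (h₁ x hx hx1).trans (by gcongr)
          · exact (h₂ x hx hx1).trans (by gcongr)
      _ = (C₁ + C₂) * ((x ^ 2)⁻¹) ^ (max m₁ m₂) := by ring
  | @mul f g hf hg ihf ihg =>
    obtain ⟨C₁, m₁, hC₁, h₁⟩ := ihf
    obtain ⟨C₂, m₂, hC₂, h₂⟩ := ihg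
    refine ⟨C₁ * C₂, m₁ + m₂, by positivity, fun x hx hx1 => ?_⟩
    rw [abs_mul, pow_add]
    calc |f x| * |g x| ≤ (C₁ * ((x ^ 2)⁻¹) ^ m₁) * (C₂ * ((x ^ 2)⁻¹) ^ m₂) :=
          mul_le_mul (h₁ x hx hx1) (h₂ x hx hx1) (abs_nonneg _) (by positivity)
      _ = C₁ * C₂ * (((x ^ 2)⁻¹) ^ m₁ * ((x ^ 2)⁻¹) ^ m₂) := by ring

lemma c0_structure (n : ℕ) : ∃ h, Nice h ∧ ∀ x : ℝ, x ≠ 0 →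
    iteratedDeriv n c0 x = Real.exp (-1 / x ^ 2) * h x := by
  induction n with
  | zero =>
    refine ⟨fun x => x * (Real.sin (1 / x) * Real.sin (1 / x)),
      Nice.mul Nice.id (Nice.mul Nice.sin Nice.sin), fun x hx => ?_⟩
    simp only [iteratedDeriv_zero, c0, if_neg hx]
    ring
  | succ n ih =>
    obtain ⟨h, hh, heq⟩ := ih
    obtain ⟨h', hh', hd⟩ := nice_deriv hh
    refine ⟨fun x => (2 * (1 / x * (1 / x * (1 / x)))) * h x + h' x,
      Nice.add (Nice.mul (Nice.mul (Nice.const 2) (Nice.mul Nice.inv (Nice.mul Nice.inv Nice.inv))) hh) hh',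
      fun x hx => ?_⟩
    rw [iteratedDeriv_succ]
    have h1 : HasDerivAt (fun y : ℝ => y ^ 2) (2 * x) x := by simpa using hasDerivAt_pow 2 x
    have h2 : HasDerivAt (fun y : ℝ => (y ^ 2)⁻¹) (-(2 * x) / (x ^ 2) ^ 2) x :=
      h1.inv (pow_ne_zero 2 hx)
    have h3 : HasDerivAt (fun y : ℝ => -1 / y ^ 2) (2 * x / (x ^ 2) ^ 2) x := by
      have := h2.neg
      simp only [neg_div, one_div]
      exact this.congr_deriv (by ring)
    have h4 : HasDerivAt (fun y : ℝ => Real.exp (-1 / y ^ 2))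
        (Real.exp (-1 / x ^ 2) * (2 * x / (x ^ 2) ^ 2)) x :=
      by have := (Real.hasDerivAt_exp (-1 / x ^ 2)).comp x h3; exact this
    have h5 : HasDerivAt (fun y => Real.exp (-1 / y ^ 2) * h y) _ x := h4.mul (hd x hx)
    have hev : iteratedDeriv n c0 =ᶠ[nhds x] fun y => Real.exp (-1 / y ^ 2) * h y := by
      filter_upwards [eventually_ne_nhds hx] with y hy using heq y hy
    rw [hev.deriv_eq, h5.deriv]
    field_simp

theorem stmt12 (n : ℕ) :
    Filter.Tendsto (fun x : ℝ => iteratedDeriv n c0 x / x)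
      (nhdsWithin 0 {x : ℝ | x ≠ 0}) (nhds 0) := by
  obtain ⟨h, hh, heq⟩ := c0_structure n
  obtain ⟨C, m, hC, hb⟩ := nice_bound hh
  have t1 : Tendsto (fun x : ℝ => (x ^ 2)⁻¹) (nhdsWithin 0 {x : ℝ | x ≠ 0}) atTop := by
    apply tendsto_inv_nhdsGT_zero.comp
    apply tendsto_nhdsWithin_of_tendsto_nhds_of_eventually_within
    · exact (by simpa using ((continuous_pow 2).tendsto (0 : ℝ)).mono_left nhdsWithin_le_nhds)
    · filter_upwards [self_mem_nhdsWithin] with x hx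
      have hx' : (x : ℝ) ≠ 0 := hx
      exact Set.mem_Ioi.mpr (by positivity)
  have t2 := (tendsto_pow_mul_exp_neg_atTop_nhds_zero (m + 1)).comp t1
  have t3 : Tendsto (fun x : ℝ => C * (((x ^ 2)⁻¹) ^ (m + 1) * Real.exp (-(x ^ 2)⁻¹)))
      (nhdsWithin 0 {x : ℝ | x ≠ 0}) (nhds 0) := by
    simpa using t2.const_mul C
  apply squeeze_zero_norm' _ t3
  have hsm : ∀ᶠ x : ℝ in nhds 0, |x| ≤ 1 := by
    have := Metric.ball_mem_nhds (0 : ℝ) one_pos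
    filter_upwards [this] with x hx
    have hx' : |x| < 1 := by simpa [Real.dist_eq] using hx
    exact hx'.le
  filter_upwards [self_mem_nhdsWithin, eventually_nhdsWithin_of_eventually_nhds hsm]
    with x hx hx1
  have hx' : (x : ℝ) ≠ 0 := hx
  have hx2 : (0 : ℝ) < x ^ 2 := by positivity
  have hxinv : |x|⁻¹ ≤ (x ^ 2)⁻¹ :=
    inv_anti₀ hx2 (by nlinarith [sq_abs x, abs_nonneg x])
  rw [Real.norm_eq_abs, heq x hx', abs_div, abs_mul, abs_of_pos (Real.exp_pos _),
    div_eq_mul_inv]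
  have key : Real.exp (-1 / x ^ 2) * |h x| * |x|⁻¹ ≤
      Real.exp (-1 / x ^ 2) * (C * ((x ^ 2)⁻¹) ^ m) * (x ^ 2)⁻¹ := by
    gcongr
    · exact hb x hx' hx1
  calc Real.exp (-1 / x ^ 2) * |h x| * |x|⁻¹
      ≤ Real.exp (-1 / x ^ 2) * (C * ((x ^ 2)⁻¹) ^ m) * (x ^ 2)⁻¹ := key
    _ = C * (((x ^ 2)⁻¹) ^ (m + 1) * Real.exp (-(x ^ 2)⁻¹)) := by
        rw [show (-1 : ℝ) / x ^ 2 = -(x ^ 2)⁻¹ by rw [neg_div, one_div]]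
        ring
end

section
/- For every ε > 0 there exists x with 0 < x < ε, deriv c₀ (x) = 0, and c₀(x) > 0; that is, the critical points of c₀ with positive critical value accumulate at 0. -/
theorem stmt15 (ε : ℝ) (hε : 0 < ε) :
    ∃ x : ℝ, 0 < x ∧ x < ε ∧ deriv c0 x = 0 ∧ 0 < c0 x := by
  have hπ : (0:ℝ) < Real.pi := Real.pi_pos
  obtain ⟨m, hm⟩ := exists_nat_gt (1 / (Real.pi * ε))
  set n : ℕ := m + 1 with hn
  have hn0 : (0:ℝ) < n := by positivity
  have hnm : (1 : ℝ) / (Real.pi * ε) < n := lt_of_lt_of_le hm (by exact_mod_cast Nat.le_succ m)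
  set a : ℝ := 1 / (((n:ℝ) + 1) * Real.pi) with ha
  set b : ℝ := 1 / ((n:ℝ) * Real.pi) with hb
  have ha0 : 0 < a := by positivity
  have hb0 : 0 < b := by positivity
  have hab : a < b := by
    apply one_div_lt_one_div_of_lt (by positivity)
    nlinarith
  have hbε : b < ε := by
    rw [hb, div_lt_iff₀ (by positivity)]
    rw [div_lt_iff₀ (by positivity)] at hnm
    nlinarith
  set x0 : ℝ := 2 / ((2 * (n:ℝ) + 1) * Real.pi) with hx0
  have hx00 : 0 < x0 := by positivity
  have hax0 : a < x0 := by
    rw [ha, hx0, div_lt_div_iff₀ (by positivity) (by positivity)]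
    nlinarith
  have hx0b : x0 < b := by
    rw [hb, hx0, div_lt_div_iff₀ (by positivity) (by positivity)]
    nlinarith
  -- value at x0 is positive
  have hsin : Real.sin (1 / x0) ^ 2 = 1 := by
    have h1 : 1 / x0 = (n:ℝ) * Real.pi + Real.pi / 2 := by
      rw [hx0, one_div_div]; ring
    rw [h1, Real.sin_add_pi_div_two]
    have := Real.sin_sq_add_cos_sq ((n:ℝ) * Real.pi)
    rw [Real.sin_nat_mul_pi] at this
    nlinarith [this]
  have hc0x0 : 0 < c0 x0 := by
    rw [c0, if_neg (ne_of_gt hx00), hsin]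
    have := Real.exp_pos (-1 / x0 ^ 2)
    nlinarith
  -- c0 vanishes at the endpoints
  have hc0a : c0 a = 0 := by
    rw [c0, if_neg (ne_of_gt ha0)]
    have h1 : 1 / a = ((n:ℝ) + 1) * Real.pi := by rw [ha, one_div_one_div]
    have h2 : ((n:ℝ) + 1) * Real.pi = ((n + 1 : ℕ) : ℝ) * Real.pi := by push_cast; ring
    rw [h1, h2, Real.sin_nat_mul_pi]
    ring
  have hc0b : c0 b = 0 := by
    rw [c0, if_neg (ne_of_gt hb0)]
    have h1 : 1 / b = (n:ℝ) * Real.pi := by rw [hb, one_div_one_div]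
    rw [h1, Real.sin_nat_mul_pi]
    ring
  -- continuity on [a, b]
  have hcontg : ContinuousOn (fun x : ℝ => Real.exp (-1 / x ^ 2) * x * (Real.sin (1 / x)) ^ 2)
      (Set.Icc a b) := by
    have hne : ∀ x ∈ Set.Icc a b, x ≠ 0 := fun x hx => ne_of_gt (lt_of_lt_of_le ha0 hx.1)
    apply ContinuousOn.mul
    apply ContinuousOn.mul
    · exact Real.continuous_exp.comp_continuousOn
        (ContinuousOn.div continuousOn_const (by fun_prop) fun x hx => pow_ne_zero 2 (hne x hx))
    · exact continuousOn_id
    · exact (Real.continuous_sin.comp_continuousOn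
        (ContinuousOn.div continuousOn_const continuousOn_id (hne))).pow 2
  have hcont : ContinuousOn c0 (Set.Icc a b) := by
    apply hcontg.congr
    intro x hx
    exact if_neg (ne_of_gt (lt_of_lt_of_le ha0 hx.1))
  -- maximum on the compact interval
  obtain ⟨x, hxmem, hmax⟩ := isCompact_Icc.exists_isMaxOn
    (Set.nonempty_Icc.mpr hab.le) hcont
  have hx0mem : x0 ∈ Set.Icc a b := ⟨hax0.le, hx0b.le⟩
  have hxpos : 0 < c0 x := lt_of_lt_of_le hc0x0 (hmax hx0mem)
  have hxa : a < x := by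
    rcases lt_or_eq_of_le hxmem.1 with h | h
    · exact h
    · exfalso; rw [← h, hc0a] at hxpos; exact lt_irrefl 0 hxpos
  have hxb : x < b := by
    rcases lt_or_eq_of_le hxmem.2 with h | h
    · exact h
    · exfalso; rw [h, hc0b] at hxpos; exact lt_irrefl 0 hxpos
  refine ⟨x, lt_trans ha0 hxa, lt_trans hxb hbε, ?_, hxpos⟩
  exact (hmax.isLocalMax (Icc_mem_nhds hxa hxb)).deriv_eq_zero
end

section
/- There exist real numbers p₁ > 0, p₂ > 0, r₁ > 0, r₂ > 0, r₁₂ > 0 and T > 0 such that, writing S₁ = {(x₁, x₂) ∈ ℝ² : x₁ = c₀(x₂)} and S₂ = {(x₁, x₂) ∈ ℝ² : (x₁−p₁)²/r₁ + (x₂−p₂)²/r₂ = r₁₂}: (a) S₁ ∩ S₂ = {(0,0), (c₀(T), T)}; (b) T > p₂ and the intersection of the open ellipse disk {(x₁, x₂) : (x₁−p₁)²/r₁ + (x₂−p₂)²/r₂ < r₁₂} with S₁ equals {(c₀(t), t) : 0 < t < T}; (c) at each of the two points (0,0) and (c₀(T), T), the vectors (1, −deriv c₀ (x₂)) and ((x₁−p₁)/r₁,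 (x₂−p₂)/r₂) are linearly independent in ℝ²; (d) the open region {(x₁, x₂) : c₀(x₂) < x₁ and (x₁−p₁)²/r₁ + (x₂−p₂)²/r₂ < r₁₂} is nonempty. -/
open Real

lemma c0_zero : c0 0 = 0 := by simp [c0]

lemma c0_invpi : c0 (1 / π) = 0 := by
  have h : (1 / π : ℝ) ≠ 0 := by positivity
  simp [c0, h, one_div_one_div, Real.sin_pi]

lemma c0_nonneg {t : ℝ} (h : 0 ≤ t) : 0 ≤ c0 t := by
  rcases eq_or_lt_of_le h with h0 | h0
  · simp [c0, ← h0]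
  · have ht : t ≠ 0 := ne_of_gt h0
    simp only [c0, ht, if_false]
    positivity

lemma exp_le_one_aux (t : ℝ) : Real.exp (-1 / t ^ 2) ≤ 1 := by
  rw [Real.exp_le_one_iff]
  exact div_nonpos_of_nonpos_of_nonneg (by norm_num) (sq_nonneg t)

lemma c0_le {t : ℝ} (h : 0 ≤ t) : c0 t ≤ t := by
  rcases eq_or_lt_of_le h with h0 | h0
  · simp [c0, ← h0]
  · have ht : t ≠ 0 := ne_of_gt h0
    simp only [c0, ht, if_false]
    have he : Real.exp (-1 / t ^ 2) ≤ 1 := exp_le_one_aux t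
    have hs : Real.sin (1 / t) ^ 2 ≤ 1 := by
      nlinarith [Real.neg_one_le_sin (1/t), Real.sin_le_one (1/t)]
    have key : (1 - Real.exp (-1 / t ^ 2) * Real.sin (1/t) ^ 2) * t ≥ 0 := by
      have h1 : Real.exp (-1 / t ^ 2) * Real.sin (1/t) ^ 2 ≤ 1 :=
        mul_le_one₀ he (sq_nonneg _) hs
      nlinarith
    nlinarith

lemma c0_nonpos {t : ℝ} (h : t ≤ 0) : c0 t ≤ 0 := by
  rcases eq_or_lt_of_le h with h0 | h0
  · simp [c0, h0]
  · have ht : t ≠ 0 := ne_of_lt h0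
    simp only [c0, ht, if_false]
    have h1 : (0:ℝ) ≤ Real.exp (-1 / t ^ 2) * Real.sin (1/t) ^ 2 := by positivity
    nlinarith [mul_nonpos_of_nonpos_of_nonneg h0.le h1]

lemma c0_big {t : ℝ} (h : 1 / π < t) : t * c0 t ≤ (π * t - 1) ^ 2 := by
  have hπ := Real.pi_pos
  have ht0 : 0 < t := lt_trans (by positivity) h
  have ht : t ≠ 0 := ne_of_gt ht0
  have hu1 : 0 < 1 / t := by positivity
  have hu2 : 1 / t < π := by
    rw [div_lt_iff₀ ht0]
    have := (div_lt_iff₀ hπ).mp h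
    nlinarith
  have hsin0 : 0 ≤ Real.sin (1 / t) :=
    Real.sin_nonneg_of_nonneg_of_le_pi hu1.le hu2.le
  have hsin1 : Real.sin (1 / t) ≤ π - 1 / t := by
    have : Real.sin (1 / t) = Real.sin (π - (π - 1/t)) := by ring_nf
    rw [this, Real.sin_pi_sub]
    exact Real.sin_le (by linarith)
  have hs2 : Real.sin (1 / t) ^ 2 ≤ (π - 1 / t) ^ 2 := by nlinarith
  have he : Real.exp (-1 / t ^ 2) ≤ 1 := exp_le_one_aux t
  simp only [c0, ht, if_false]
  have hkey : t * (Real.exp (-1 / t ^ 2) * t * Real.sin (1/t) ^ 2) ≤ t^2 * (π - 1/t)^2 := by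
    have h1 : Real.exp (-1 / t ^ 2) * Real.sin (1/t) ^ 2 ≤ (π - 1/t)^2 := by
      nlinarith [Real.exp_pos (-1 / t ^ 2), sq_nonneg (Real.sin (1/t))]
    nlinarith [sq_nonneg t, mul_nonneg (Real.exp_pos (-1/t^2)).le (sq_nonneg (Real.sin (1/t)))]
  have heq : t^2 * (π - 1/t)^2 = (π * t - 1)^2 := by
    field_simp
  linarith [hkey, heq.le]

lemma exp_neg_le_sq {x : ℝ} (hx : x ≠ 0) : Real.exp (-1 / x ^ 2) ≤ x ^ 2 := by
  have hx2 : (0:ℝ) < x ^ 2 := by positivity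
  have h1 : 1 / x ^ 2 ≤ Real.exp (1 / x ^ 2) := by
    have := Real.add_one_le_exp (1 / x ^ 2); linarith
  have h2 : Real.exp (-1 / x ^ 2) = (Real.exp (1 / x ^ 2))⁻¹ := by
    rw [← Real.exp_neg]; ring_nf
  have h3 : (Real.exp (1 / x ^ 2))⁻¹ ≤ (1 / x ^ 2)⁻¹ :=
    inv_anti₀ (by positivity) h1
  rw [h2]
  calc (Real.exp (1 / x ^ 2))⁻¹ ≤ (1 / x ^ 2)⁻¹ := h3
    _ = x ^ 2 := by field_simp

lemma hasDerivAt_c0_zero : HasDerivAt c0 0 0 := by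
  rw [hasDerivAt_iff_tendsto_slope]
  apply squeeze_zero_norm' (a := fun x : ℝ => x ^ 2)
  · filter_upwards [self_mem_nhdsWithin] with x (hx : x ≠ 0)
    have hslope : slope c0 0 x = Real.exp (-1 / x ^ 2) * Real.sin (1 / x) ^ 2 := by
      rw [slope_def_field]
      simp only [c0, hx, if_false, if_pos rfl, eq_self_iff_true, if_true]
      field_simp
      ring
    rw [hslope]
    have hs : Real.sin (1 / x) ^ 2 ≤ 1 := by
      nlinarith [Real.neg_one_le_sin (1/x), Real.sin_le_one (1/x)]
    have he : Real.exp (-1 / x ^ 2) ≤ x ^ 2 := exp_neg_le_sq hx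
    have hpos : (0:ℝ) ≤ Real.exp (-1 / x ^ 2) * Real.sin (1 / x) ^ 2 := by positivity
    rw [Real.norm_eq_abs, abs_of_nonneg hpos]
    nlinarith [Real.exp_pos (-1 / x ^ 2)]
  · have : Filter.Tendsto (fun x : ℝ => x ^ 2) (nhds 0) (nhds 0) := by
      simpa using (continuous_pow 2).tendsto (0:ℝ)
    exact this.mono_left nhdsWithin_le_nhds

lemma hasDerivAt_c0_invpi : HasDerivAt c0 0 (1 / π) := by
  have hπ := Real.pi_pos
  set T : ℝ := 1 / π with hTdef
  have hT : T ≠ 0 := by positivity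
  have hT2 : T ^ 2 ≠ 0 := pow_ne_zero 2 hT
  have hpow : HasDerivAt (fun x : ℝ => x ^ 2) (2 * T) T := by
    simpa using hasDerivAt_pow 2 T
  have hfrac : HasDerivAt (fun x : ℝ => -1 / x ^ 2)
      ((0 * T ^ 2 - (-1) * (2 * T)) / (T ^ 2) ^ 2) T :=
    (hasDerivAt_const T (-1 : ℝ)).div hpow hT2
  have hexp : HasDerivAt (fun x : ℝ => Real.exp (-1 / x ^ 2))
      (Real.exp (-1 / T ^ 2) * ((0 * T ^ 2 - (-1) * (2 * T)) / (T ^ 2) ^ 2)) T := hfrac.exp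
  have hinv : HasDerivAt (fun x : ℝ => 1 / x) ((0 * T - 1 * 1) / T ^ 2) T :=
    (hasDerivAt_const T (1 : ℝ)).div (hasDerivAt_id T) hT
  have hsin : HasDerivAt (fun x : ℝ => Real.sin (1 / x))
      (Real.cos (1 / T) * ((0 * T - 1 * 1) / T ^ 2)) T :=
    (Real.hasDerivAt_sin (1 / T)).comp T hinv
  have hsin2 : HasDerivAt (fun x : ℝ => Real.sin (1 / x) ^ 2)
      (2 * Real.sin (1 / T) ^ 1 * (Real.cos (1 / T) * ((0 * T - 1 * 1) / T ^ 2))) T :=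
    hsin.pow 2
  have hprod := (hexp.mul (hasDerivAt_id T)).mul hsin2
  have hev : c0 =ᶠ[nhds T] fun x => Real.exp (-1 / x ^ 2) * x * Real.sin (1 / x) ^ 2 := by
    filter_upwards [eventually_ne_nhds hT] with x hx
    simp [c0, hx]
  have hsinT : Real.sin T⁻¹ = 0 := by
    rw [hTdef]
    simp [Real.sin_pi]
  have hc0 := hprod.congr_of_eventuallyEq hev
  simpa [hsinT] using hc0

lemma pi_facts : (3:ℝ) < π ∧ π < 3.15 :=
  ⟨Real.pi_gt_three, by linarith [Real.pi_lt_d2]⟩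

lemma half_eq : (1 : ℝ) / (2 * π) = (1/π) / 2 := by
  rw [div_div]; ring_nf

lemma quarter_eq : (1 : ℝ) / (4 * π^2) = ((1:ℝ)/π)^2 / 4 := by
  rw [div_pow, div_div]
  norm_num
  ring_nf

lemma E_lt {t : ℝ} (h1 : 0 < t) (h2 : t < 1 / π) :
    (c0 t - 1)^2/100 + (t - 1/(2*π))^2/1 < 1/100 + 1/(4*π^2) := by
  have hπ := Real.pi_pos
  set s : ℝ := 1 / π with hs
  have hs0 : 0 < s := by positivity
  have hs3 : s < 1/2 := by
    rw [hs, div_lt_iff₀ hπ]; nlinarith [pi_facts.1]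
  rw [half_eq, quarter_eq]
  have hc0 : 0 ≤ c0 t := c0_nonneg h1.le
  have hc1 : c0 t ≤ t := c0_le h1.le
  nlinarith [mul_pos h1 (sub_pos.mpr h2), sq_nonneg (c0 t),
    mul_nonneg hc0 (by linarith : (0:ℝ) ≤ 2 - c0 t)]

lemma E_gt_neg {t : ℝ} (h : t < 0) :
    (c0 t - 1)^2/100 + (t - 1/(2*π))^2/1 > 1/100 + 1/(4*π^2) := by
  have hπ := Real.pi_pos
  set s : ℝ := 1 / π with hs
  have hs0 : 0 < s := by positivity
  rw [half_eq, quarter_eq]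
  have hc0 : c0 t ≤ 0 := c0_nonpos h.le
  nlinarith [mul_pos_of_neg_of_neg h (by linarith : t - s < 0), sq_nonneg (c0 t),
    mul_nonneg (neg_nonneg.mpr hc0) (by norm_num : (0:ℝ) ≤ 2)]

lemma E_gt_big {t : ℝ} (h : 1 / π < t) :
    (c0 t - 1)^2/100 + (t - 1/(2*π))^2/1 > 1/100 + 1/(4*π^2) := by
  have hπ := Real.pi_pos
  have hπ3 := pi_facts.1
  have hπ4 := pi_facts.2
  set s : ℝ := 1 / π with hs
  have hs0 : 0 < s := by positivity
  have hsπ : s * π = 1 := by rw [hs]; field_simp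
  have ht0 : 0 < t := lt_trans hs0 h
  have hd : 0 < t - s := sub_pos.mpr h
  have hb : t * c0 t ≤ (π * t - 1)^2 := c0_big h
  have hc0 : 0 ≤ c0 t := c0_nonneg ht0.le
  have h100s : 2 * π^2 < 100 * s := by nlinarith [mul_pos hs0 hπ]
  have h5 : 2 * (π * t - 1)^2 < 100 * t^2 * (t - s) := by
    have hfac : (π * t - 1) = π * (t - s) := by rw [mul_sub]; nlinarith [hsπ]
    rw [hfac]
    have hchain : 2 * π^2 * (t - s) < 100 * t^2 := by
      nlinarith [mul_pos ht0 hd, mul_pos hs0 ht0, mul_lt_mul_of_pos_right h100s ht0]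
    nlinarith [mul_lt_mul_of_pos_right hchain hd, sq_nonneg (t-s), mul_pos hd hd]
  have h6 : 2 * c0 t < 100 * t * (t - s) := by
    have h7 : (2 * c0 t) * t < (100 * t * (t - s)) * t := by nlinarith [hb, h5]
    exact lt_of_mul_lt_mul_right h7 ht0.le
  rw [half_eq, quarter_eq]
  nlinarith [h6, sq_nonneg (c0 t)]

lemma E_zero :
    (c0 0 - 1)^2/100 + ((0:ℝ) - 1/(2*π))^2/1 = 1/100 + 1/(4*π^2) := by
  have hπ := Real.pi_ne_zero
  rw [c0_zero]
  field_simp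
  ring

lemma E_T :
    (c0 (1/π) - 1)^2/100 + ((1/π : ℝ) - 1/(2*π))^2/1 = 1/100 + 1/(4*π^2) := by
  have hπ := Real.pi_ne_zero
  rw [c0_invpi]
  field_simp
  ring

lemma E_eq_iff (t : ℝ) :
    (c0 t - 1)^2/100 + (t - 1/(2*π))^2/1 = 1/100 + 1/(4*π^2) ↔ t = 0 ∨ t = 1/π := by
  constructor
  · intro h
    by_contra hc
    push_neg at hc
    obtain ⟨h0, hT⟩ := hc
    rcases lt_trichotomy t 0 with h1 | h1 | h1
    · exact absurd h (ne_of_gt (E_gt_neg h1))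
    · exact h0 h1
    · rcases lt_trichotomy t (1/π) with h2 | h2 | h2
      · exact absurd h (ne_of_lt (E_lt h1 h2))
      · exact hT h2
      · exact absurd h (ne_of_gt (E_gt_big h2))
  · rintro (rfl | rfl)
    · exact E_zero
    · exact E_T

lemma E_lt_iff (t : ℝ) :
    (c0 t - 1)^2/100 + (t - 1/(2*π))^2/1 < 1/100 + 1/(4*π^2) ↔ 0 < t ∧ t < 1/π := by
  constructor
  · intro h
    rcases lt_trichotomy t 0 with h1 | h1 | h1
    · exact absurd h (asymm (E_gt_neg h1))
    · subst h1; exact absurd h (by rw [E_zero]; exact lt_irrefl _)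
    · rcases lt_trichotomy t (1/π) with h2 | h2 | h2
      · exact ⟨h1, h2⟩
      · subst h2; exact absurd h (by rw [E_T]; exact lt_irrefl _)
      · exact absurd h (asymm (E_gt_big h2))
  · exact fun ⟨h1, h2⟩ => E_lt h1 h2

theorem stmt16 :
    ∃ p₁ p₂ r₁ r₂ r₁₂ T : ℝ,
      0 < p₁ ∧ 0 < p₂ ∧ 0 < r₁ ∧ 0 < r₂ ∧ 0 < r₁₂ ∧ 0 < T ∧
      -- (a)
      {q : ℝ × ℝ | q.1 = c0 q.2} ∩
          {q : ℝ × ℝ | (q.1 - p₁) ^ 2 / r₁ + (q.2 - p₂) ^ 2 / r₂ = r₁₂} =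
        {((0 : ℝ), (0 : ℝ)), (c0 T, T)} ∧
      -- (b)
      T > p₂ ∧
      {q : ℝ × ℝ | (q.1 - p₁) ^ 2 / r₁ + (q.2 - p₂) ^ 2 / r₂ < r₁₂} ∩
          {q : ℝ × ℝ | q.1 = c0 q.2} =
        {q : ℝ × ℝ | ∃ t : ℝ, 0 < t ∧ t < T ∧ q = (c0 t, t)} ∧
      -- (c)
      (∀ q ∈ ({((0 : ℝ), (0 : ℝ)), (c0 T, T)} : Set (ℝ × ℝ)),
        LinearIndependent ℝ
          ![((1 : ℝ), -deriv c0 q.2), ((q.1 - p₁) / r₁, (q.2 - p₂) / r₂)]) ∧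
      -- (d)
      {q : ℝ × ℝ |
        c0 q.2 < q.1 ∧ (q.1 - p₁) ^ 2 / r₁ + (q.2 - p₂) ^ 2 / r₂ < r₁₂}.Nonempty := by
  have hπ := Real.pi_pos
  have hπ3 := pi_facts.1
  refine ⟨1, 1/(2*π), 100, 1, 1/100 + 1/(4*π^2), 1/π, one_pos, by positivity, by norm_num,
    one_pos, by positivity, by positivity, ?_, ?_, ?_, ?_, ?_⟩
  · -- (a)
    ext ⟨x, y⟩
    simp only [Set.mem_inter_iff, Set.mem_setOf_eq, Set.mem_insert_iff,
      Set.mem_singleton_iff, Prod.mk.injEq]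
    constructor
    · rintro ⟨rfl, heq⟩
      rcases (E_eq_iff y).mp heq with rfl | rfl
      · exact Or.inl ⟨c0_zero, rfl⟩
      · exact Or.inr ⟨rfl, rfl⟩
    · rintro (⟨rfl, rfl⟩ | ⟨rfl, rfl⟩)
      · refine ⟨c0_zero.symm, ?_⟩
        have := E_zero
        rw [c0_zero] at this
        exact this
      · exact ⟨rfl, E_T⟩
  · -- T > p₂
    rw [gt_iff_lt, div_lt_div_iff₀ (by positivity) (by positivity)]
    nlinarith
  · -- (b)
    ext ⟨x, y⟩
    simp only [Set.mem_inter_iff, Set.mem_setOf_eq, Prod.mk.injEq]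
    constructor
    · rintro ⟨hlt, rfl⟩
      obtain ⟨h1, h2⟩ := (E_lt_iff y).mp hlt
      exact ⟨y, h1, h2, rfl, rfl⟩
    · rintro ⟨t, h1, h2, rfl, rfl⟩
      exact ⟨(E_lt_iff _).mpr ⟨h1, h2⟩, rfl⟩
  · -- (c)
    intro q hq
    have hd0 : deriv c0 0 = 0 := hasDerivAt_c0_zero.deriv
    have hdT : deriv c0 (1/π) = 0 := hasDerivAt_c0_invpi.deriv
    have hhalf : (1:ℝ)/(2*π) ≠ 0 := by positivity
    simp only [Set.mem_insert_iff, Set.mem_singleton_iff] at hq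
    rcases hq with rfl | rfl
    · rw [linearIndependent_fin2]
      constructor
      · simp only [Matrix.cons_val_one, Matrix.head_cons, Ne, Prod.ext_iff]
        intro ⟨h1, h2⟩
        simp only [Prod.snd_zero, div_one, Matrix.cons_val_zero] at h2
        have hpos : (0:ℝ) < 1/(2*π) := by positivity
        linarith
      · intro a
        simp only [Matrix.cons_val_one, Matrix.head_cons, Matrix.cons_val_zero,
          Prod.smul_mk, smul_eq_mul, Ne, Prod.mk.injEq, not_and]
        intro h1 h2
        simp only [hd0, neg_zero, div_one] at h2 ⊢
        have hne : (0:ℝ) - 1/(2*π) ≠ 0 := by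
          intro hc
          have hpos : (0:ℝ) < 1/(2*π) := by positivity
          linarith
        have ha : a = 0 := by
          rcases mul_eq_zero.mp h2 with h | h
          · exact h
          · exact absurd h hne
        rw [ha] at h1
        norm_num at h1
    · rw [linearIndependent_fin2]
      constructor
      · simp only [Matrix.cons_val_one, Matrix.head_cons, Ne, Prod.ext_iff]
        intro ⟨h1, h2⟩
        simp only [Prod.snd_zero, div_one, Matrix.cons_val_zero] at h2
        have hgt : (0:ℝ) < 1/π - 1/(2*π) := by
          rw [half_eq]
          have : (0:ℝ) < 1/π := by positivity
          linarith
        rw [h2] at hgt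
        exact lt_irrefl 0 hgt
      · intro a
        simp only [Matrix.cons_val_one, Matrix.head_cons, Matrix.cons_val_zero,
          Prod.smul_mk, smul_eq_mul, Ne, Prod.mk.injEq, not_and]
        intro h1 h2
        simp only [hdT, neg_zero, div_one] at h2 ⊢
        have hne : (1:ℝ)/π - 1/(2*π) ≠ 0 := by
          rw [half_eq]
          have : (0:ℝ) < 1/π := by positivity
          intro hc; nlinarith
        have ha : a = 0 := by
          rcases mul_eq_zero.mp h2 with h | h
          · exact h
          · exact absurd h hne
        rw [ha] at h1
        norm_num at h1
  · -- (d)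
    refine ⟨(1, 1/(2*π)), ?_, ?_⟩
    · show c0 (1/(2*π)) < 1
      have h1 : c0 (1/(2*π)) ≤ 1/(2*π) := c0_le (by positivity)
      have h2 : (1:ℝ)/(2*π) < 1 := by
        rw [div_lt_one (by positivity)]; nlinarith
      linarith
    · show ((1:ℝ) - 1)^2/100 + ((1:ℝ)/(2*π) - 1/(2*π))^2/1 < 1/100 + 1/(4*π^2)
      have : ((1:ℝ) - 1)^2/100 + ((1:ℝ)/(2*π) - 1/(2*π))^2/1 = 0 := by ring
      rw [this]
      positivity
end

section
/- For all integers m₁, m₂ > 1, all reals p₁, p₂ and all reals r₁, r₂, r₁₂ > 0, the zero set E⁻¹(0,0) is a compact subset of ℝ × ℝ × (Fin m₁ → ℝ) × (Fin m₂ → ℝ). -/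
noncomputable def E (m₁ m₂ : ℕ) (p₁ p₂ r₁ r₂ r₁₂ : ℝ) :
    ℝ × ℝ × (Fin m₁ → ℝ) × (Fin m₂ → ℝ) → ℝ × ℝ :=
  fun p =>
    ((p.1 - c0 p.2.1) - ∑ j, (p.2.2.1 j) ^ 2,
      r₁₂ - ((p.1 - p₁) ^ 2 / r₁ + (p.2.1 - p₂) ^ 2 / r₂) - ∑ j, (p.2.2.2 j) ^ 2)

lemma c0_abs_le (x : ℝ) : |c0 x| ≤ |x| := by
  unfold c0
  by_cases hx : x = 0
  · simp [hx]
  · rw [if_neg hx]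
    have h1 : Real.exp (-1 / x ^ 2) ≤ 1 := by
      apply Real.exp_le_one_iff.mpr
      have : (0:ℝ) < x ^ 2 := by positivity
      rw [neg_div]
      simp only [Left.neg_nonpos_iff]
      positivity
    have h2 : (Real.sin (1 / x)) ^ 2 ≤ 1 := by
      rw [sq_le_one_iff_abs_le_one]
      exact Real.abs_sin_le_one _
    have he : (0:ℝ) ≤ Real.exp (-1 / x ^ 2) := (Real.exp_pos _).le
    have hs : (0:ℝ) ≤ (Real.sin (1 / x)) ^ 2 := sq_nonneg _
    rw [abs_mul, abs_mul]
    calc |Real.exp (-1 / x ^ 2)| * |x| * |(Real.sin (1 / x)) ^ 2|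
        ≤ 1 * |x| * 1 := by
          apply mul_le_mul
          · apply mul_le_mul _ le_rfl (abs_nonneg _) zero_le_one
            rwa [abs_of_nonneg he]
          · rw [abs_of_nonneg hs]; exact h2
          · exact abs_nonneg _
          · positivity
      _ = |x| := by ring

@[fun_prop, continuity]
lemma c0_continuous : Continuous c0 := by
  rw [continuous_iff_continuousAt]
  intro a
  by_cases ha : a = 0
  · subst ha
    have h0 : c0 0 = 0 := by simp [c0]
    rw [ContinuousAt, h0]
    apply squeeze_zero_norm (fun x => by simpa using c0_abs_le x)
    simpa using (continuous_abs.tendsto (0:ℝ))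
  · have heq : c0 =ᶠ[nhds a] fun x => Real.exp (-1 / x ^ 2) * x * (Real.sin (1 / x)) ^ 2 := by
      filter_upwards [isOpen_ne.mem_nhds ha] with x hx
      simp [c0, hx]
    have hg : ContinuousAt (fun x => Real.exp (-1 / x ^ 2) * x * (Real.sin (1 / x)) ^ 2) a := by
      have h2 : a ^ 2 ≠ 0 := pow_ne_zero 2 ha
      fun_prop (disch := assumption)
    exact hg.congr heq.symm

theorem stmt17 (m₁ m₂ : ℕ) (hm₁ : 1 < m₁) (hm₂ : 1 < m₂)
    (p₁ p₂ r₁ r₂ r₁₂ : ℝ) (hr₁ : 0 < r₁) (hr₂ : 0 < r₂) (hr₁₂ : 0 < r₁₂) :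
    IsCompact {p : ℝ × ℝ × (Fin m₁ → ℝ) × (Fin m₂ → ℝ) |
      E m₁ m₂ p₁ p₂ r₁ r₂ r₁₂ p = (0, 0)} := by
  have hE : Continuous (E m₁ m₂ p₁ p₂ r₁ r₂ r₁₂) := by
    unfold E
    have h1 : r₁ ≠ 0 := hr₁.ne'
    have h2 : r₂ ≠ 0 := hr₂.ne'
    fun_prop (disch := assumption)
  have hclosed : IsClosed {p : ℝ × ℝ × (Fin m₁ → ℝ) × (Fin m₂ → ℝ) |
      E m₁ m₂ p₁ p₂ r₁ r₂ r₁₂ p = (0, 0)} :=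
    isClosed_singleton.preimage hE
  apply Metric.isCompact_of_isClosed_isBounded hclosed
  set A : ℝ := |p₁| + Real.sqrt (r₁ * r₁₂) with hA
  set B : ℝ := |p₂| + Real.sqrt (r₂ * r₁₂) with hB
  set R : ℝ := max A (max B (max (Real.sqrt (A + B)) (Real.sqrt r₁₂))) with hR
  have hAnn : 0 ≤ A := by positivity
  have hBnn : 0 ≤ B := by positivity
  have hRnn : 0 ≤ R := le_trans hAnn (le_max_left _ _)
  apply Bornology.IsBounded.subset (Metric.isBounded_closedBall (x := (0 : ℝ × ℝ × (Fin m₁ → ℝ) × (Fin m₂ → ℝ))) (r := R))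
  rintro ⟨x₁, x₂, y, z⟩ hp
  simp only [Set.mem_setOf_eq, E, Prod.mk.injEq] at hp
  obtain ⟨h1, h2⟩ := hp
  have hz : ∑ j, (z j) ^ 2 ≤ r₁₂ := by
    nlinarith [sq_nonneg (x₁ - p₁), sq_nonneg (x₂ - p₂),
      div_nonneg (sq_nonneg (x₁ - p₁)) hr₁.le, div_nonneg (sq_nonneg (x₂ - p₂)) hr₂.le]
  have hznn : (0:ℝ) ≤ ∑ j, (z j) ^ 2 := Finset.sum_nonneg fun j _ => sq_nonneg _
  have hynn : (0:ℝ) ≤ ∑ j, (y j) ^ 2 := Finset.sum_nonneg fun j _ => sq_nonneg _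
  have hx1sq : (x₁ - p₁) ^ 2 ≤ r₁ * r₁₂ := by
    have hd : (x₁ - p₁) ^ 2 / r₁ ≤ r₁₂ := by
      linarith [div_nonneg (sq_nonneg (x₂ - p₂)) hr₂.le]
    have := (div_le_iff₀ hr₁).mp hd
    linarith [this, mul_comm r₁₂ r₁]
  have hx2sq : (x₂ - p₂) ^ 2 ≤ r₂ * r₁₂ := by
    have hd : (x₂ - p₂) ^ 2 / r₂ ≤ r₁₂ := by
      linarith [div_nonneg (sq_nonneg (x₁ - p₁)) hr₁.le]
    have := (div_le_iff₀ hr₂).mp hd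
    linarith [this, mul_comm r₁₂ r₂]
  have habs1 : |x₁| ≤ A := by
    have : |x₁ - p₁| ≤ Real.sqrt (r₁ * r₁₂) := by
      rw [← Real.sqrt_sq_eq_abs]
      exact Real.sqrt_le_sqrt hx1sq
    calc |x₁| = |(x₁ - p₁) + p₁| := by ring_nf
      _ ≤ |x₁ - p₁| + |p₁| := abs_add_le _ _
      _ ≤ Real.sqrt (r₁ * r₁₂) + |p₁| := by linarith
      _ = A := by rw [hA]; ring
  have habs2 : |x₂| ≤ B := by
    have : |x₂ - p₂| ≤ Real.sqrt (r₂ * r₁₂) := by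
      rw [← Real.sqrt_sq_eq_abs]
      exact Real.sqrt_le_sqrt hx2sq
    calc |x₂| = |(x₂ - p₂) + p₂| := by ring_nf
      _ ≤ |x₂ - p₂| + |p₂| := abs_add_le _ _
      _ ≤ Real.sqrt (r₂ * r₁₂) + |p₂| := by linarith
      _ = B := by rw [hB]; ring
  have hysum : ∑ j, (y j) ^ 2 ≤ A + B := by
    have hc : |c0 x₂| ≤ B := le_trans (le_trans (c0_abs_le x₂) habs2) le_rfl
    have := abs_le.mp habs1
    have := abs_le.mp hc
    linarith
  rw [Metric.mem_closedBall, dist_zero_right]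
  rw [Prod.norm_def]
  apply max_le
  · simp only [Real.norm_eq_abs]
    exact le_trans habs1 (le_max_left _ _)
  rw [Prod.norm_def]
  apply max_le
  · simp only [Real.norm_eq_abs]
    exact le_trans habs2 (le_trans (le_max_left _ _) (le_max_right _ _))
  rw [Prod.norm_def]
  apply max_le
  · rw [pi_norm_le_iff_of_nonneg hRnn]
    intro j
    have hj : (y j) ^ 2 ≤ A + B :=
      le_trans (Finset.single_le_sum (fun i _ => sq_nonneg (y i)) (Finset.mem_univ j)) hysum
    have : |y j| ≤ Real.sqrt (A + B) := by
      rw [← Real.sqrt_sq_eq_abs]; exact Real.sqrt_le_sqrt hj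
    simp only [Real.norm_eq_abs]
    exact le_trans this (le_trans (le_max_left _ _) (le_trans (le_max_right _ _) (le_max_right _ _)))
  · rw [pi_norm_le_iff_of_nonneg hRnn]
    intro j
    have hj : (z j) ^ 2 ≤ r₁₂ :=
      le_trans (Finset.single_le_sum (fun i _ => sq_nonneg (z i)) (Finset.mem_univ j)) hz
    have : |z j| ≤ Real.sqrt r₁₂ := by
      rw [← Real.sqrt_sq_eq_abs]; exact Real.sqrt_le_sqrt hj
    simp only [Real.norm_eq_abs]
    exact le_trans this (le_trans (le_max_right _ _) (le_trans (le_max_right _ _) (le_max_right _ _)))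
end
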